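/- arXiv:2501.05048 — 3 statements merged into one kernel-verified Lean document; each statement's English description precedes it below -/
import Mathlib

section
/- Let p ≥ 1, n a positive natural, and R > 0. Let w, ŵ : Fin n → ℝ≥0 with w(i) ≤ 4R for all i and ∑ i, ŵ(i) ≥ n·(R/6). Then (∑ i, (w i)^p)^{1/p} ≤ 24 · (∑ i, (ŵ i)^p)^{1/p}. -/
theorem stmt_6 (p : ℝ) (hp : 1 ≤ p) (n : ℕ) (hn : 0 < n) (R : ℝ) (hR : 0 < R)
    (w what : Fin n → ℝ) (hw0 : ∀ i, 0 ≤ w i) (hwhat0 : ∀ i, 0 ≤ what i)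
    (hw : ∀ i, w i ≤ 4 * R) (hwhat : (n : ℝ) * (R / 6) ≤ ∑ i, what i) :
    (∑ i, (w i) ^ p) ^ (1 / p) ≤ 24 * (∑ i, (what i) ^ p) ^ (1 / p) := by
  have hp0 : 0 < p := lt_of_lt_of_le one_pos hp
  have hn0 : (0:ℝ) < n := Nat.cast_pos.mpr hn
  have h4R : (0:ℝ) ≤ 4 * R := by positivity
  -- upper bound on LHS
  have h1 : ∑ i, (w i) ^ p ≤ (n : ℝ) * (4 * R) ^ p := by
    calc ∑ i, (w i) ^ p ≤ ∑ _i : Fin n, (4 * R) ^ p :=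
          Finset.sum_le_sum fun i _ => Real.rpow_le_rpow (hw0 i) (hw i) (le_of_lt hp0)
      _ = (n : ℝ) * (4 * R) ^ p := by simp [mul_comm]
  -- lower bound on RHS sum via Jensen
  have hjensen := Real.rpow_arith_mean_le_arith_mean_rpow Finset.univ
      (fun _ : Fin n => 1 / (n : ℝ)) what
      (fun i _ => by positivity)
      (by simp [Finset.card_univ]; field_simp)
      (fun i _ => hwhat0 i) hp
  have hmean : R / 6 ≤ (1 / (n : ℝ)) * ∑ i, what i := by
    rw [mul_comm, ← div_eq_mul_one_div, le_div_iff₀ hn0, mul_comm]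
    exact hwhat
  have h2 : (n : ℝ) * (R / 6) ^ p ≤ ∑ i, (what i) ^ p := by
    have hR6 : (0:ℝ) ≤ R / 6 := by positivity
    have := Real.rpow_le_rpow hR6 hmean (le_of_lt hp0)
    have h3 : (R / 6) ^ p ≤ (1 / (n : ℝ)) * ∑ i, (what i) ^ p := by
      calc (R / 6) ^ p ≤ ((1 / (n : ℝ)) * ∑ i, what i) ^ p := this
        _ = (∑ i, (1 / (n : ℝ)) * what i) ^ p := by rw [Finset.mul_sum]
        _ ≤ ∑ i, (1 / (n : ℝ)) * (what i) ^ p := hjensen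
        _ = (1 / (n : ℝ)) * ∑ i, (what i) ^ p := by rw [Finset.mul_sum]
    calc (n : ℝ) * (R / 6) ^ p ≤ (n : ℝ) * ((1 / (n : ℝ)) * ∑ i, (what i) ^ p) := by
          exact mul_le_mul_of_nonneg_left h3 (le_of_lt hn0)
      _ = ∑ i, (what i) ^ p := by field_simp
  -- take 1/p powers
  have hL : (∑ i, (w i) ^ p) ^ (1 / p) ≤ ((n : ℝ) * (4 * R) ^ p) ^ (1 / p) :=
    Real.rpow_le_rpow (Finset.sum_nonneg fun i _ => Real.rpow_nonneg (hw0 i) p) h1 (by positivity)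
  have hRhs : ((n : ℝ) * (R / 6) ^ p) ^ (1 / p) ≤ (∑ i, (what i) ^ p) ^ (1 / p) :=
    Real.rpow_le_rpow (by positivity) h2 (by positivity)
  have key1 : ((n : ℝ) * (4 * R) ^ p) ^ (1 / p) = (n : ℝ) ^ (1 / p) * (4 * R) := by
    rw [Real.mul_rpow (le_of_lt hn0) (Real.rpow_nonneg h4R p),
      ← Real.rpow_mul h4R, mul_one_div_cancel (ne_of_gt hp0), Real.rpow_one]
  have key2 : ((n : ℝ) * (R / 6) ^ p) ^ (1 / p) = (n : ℝ) ^ (1 / p) * (R / 6) := by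
    have hR6 : (0:ℝ) ≤ R / 6 := by positivity
    rw [Real.mul_rpow (le_of_lt hn0) (Real.rpow_nonneg hR6 p),
      ← Real.rpow_mul hR6, mul_one_div_cancel (ne_of_gt hp0), Real.rpow_one]
  calc (∑ i, (w i) ^ p) ^ (1 / p) ≤ (n : ℝ) ^ (1 / p) * (4 * R) := key1 ▸ hL
    _ = 24 * ((n : ℝ) ^ (1 / p) * (R / 6)) := by ring
    _ ≤ 24 * (∑ i, (what i) ^ p) ^ (1 / p) := by
        apply mul_le_mul_of_nonneg_left (key2 ▸ hRhs) (by norm_num)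
end

section
/- Let p ≥ 1, n a positive natural, and R > 0. Let w, ŵ : Fin n → ℝ≥0 with w(i) ≤ 4R for all i and ∑ i, ŵ(i) ≥ n·(4R/9). Then (∑ i, (w i)^p)^{1/p} ≤ 9 · (∑ i, (ŵ i)^p)^{1/p}. -/
theorem stmt_7 (p : ℝ) (hp : 1 ≤ p) (n : ℕ) (hn : 0 < n) (R : ℝ) (hR : 0 < R)
    (w what : Fin n → ℝ) (hw0 : ∀ i, 0 ≤ w i) (hwhat0 : ∀ i, 0 ≤ what i)
    (hw : ∀ i, w i ≤ 4 * R) (hwhat : (n : ℝ) * (4 * R / 9) ≤ ∑ i, what i) :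
    (∑ i, (w i) ^ p) ^ (1 / p) ≤ 9 * (∑ i, (what i) ^ p) ^ (1 / p) := by
  have hp0 : 0 < p := lt_of_lt_of_le one_pos hp
  have hn0 : (0:ℝ) < n := Nat.cast_pos.mpr hn
  have h4R : (0:ℝ) < 4 * R := by linarith
  -- upper bound on LHS
  have hL : ∑ i, (w i) ^ p ≤ (n : ℝ) * (4 * R) ^ p := by
    calc ∑ i, (w i) ^ p ≤ ∑ _i : Fin n, (4 * R) ^ p :=
          Finset.sum_le_sum fun i _ => Real.rpow_le_rpow (hw0 i) (hw i) hp0.le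
      _ = (n : ℝ) * (4 * R) ^ p := by simp [mul_comm]
  -- lower bound on RHS via convexity
  have hconv := Real.rpow_arith_mean_le_arith_mean_rpow Finset.univ
      (fun _ : Fin n => (n : ℝ)⁻¹) what (fun i _ => by positivity)
      (by simp [Finset.card_univ]; field_simp) (fun i _ => hwhat0 i) hp
  have hmean : ((n : ℝ)⁻¹ * ∑ i, what i) ^ p ≤ (n : ℝ)⁻¹ * ∑ i, (what i) ^ p := by
    simpa [Finset.mul_sum] using hconv
  have hlow : (4 * R / 9) ^ p ≤ (n : ℝ)⁻¹ * ∑ i, (what i) ^ p := by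
    refine le_trans ?_ hmean
    refine Real.rpow_le_rpow (by positivity) ?_ hp0.le
    rw [inv_mul_eq_div, le_div_iff₀ hn0]
    linarith [hwhat]
  have hR2 : (n : ℝ) * (4 * R / 9) ^ p ≤ ∑ i, (what i) ^ p := by
    have := mul_le_mul_of_nonneg_left hlow hn0.le
    rwa [← mul_assoc, mul_inv_cancel₀ hn0.ne', one_mul] at this
  -- combine
  have key : ∑ i, (w i) ^ p ≤ 9 ^ p * ∑ i, (what i) ^ p := by
    calc ∑ i, (w i) ^ p ≤ (n : ℝ) * (4 * R) ^ p := hL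
      _ = 9 ^ p * ((n : ℝ) * (4 * R / 9) ^ p) := by
          rw [show (9:ℝ)^p * ((n:ℝ) * (4*R/9)^p) = (n:ℝ) * ((9:ℝ)^p * (4*R/9)^p) by ring,
            ← Real.mul_rpow (by norm_num) (by positivity),
            show (9:ℝ) * (4*R/9) = 4*R by ring]
      _ ≤ 9 ^ p * ∑ i, (what i) ^ p := by
          exact mul_le_mul_of_nonneg_left hR2 (by positivity)
  have h1 : (∑ i, (w i) ^ p) ^ (1/p) ≤ (9 ^ p * ∑ i, (what i) ^ p) ^ (1/p) := by
    apply Real.rpow_le_rpow ?_ key (by positivity)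
    exact Finset.sum_nonneg fun i _ => Real.rpow_nonneg (hw0 i) p
  calc (∑ i, (w i) ^ p) ^ (1/p) ≤ (9 ^ p * ∑ i, (what i) ^ p) ^ (1/p) := h1
    _ = 9 * (∑ i, (what i) ^ p) ^ (1/p) := by
        rw [Real.mul_rpow (by positivity) (Finset.sum_nonneg fun i _ => Real.rpow_nonneg (hwhat0 i) p),
          ← Real.rpow_mul (by norm_num), mul_one_div_cancel hp0.ne', Real.rpow_one]
end

section
/- Let c ≥ 1 and let w, ŵ : Fin k → ℝ≥0 be nonincreasing sequences such that ∑_{i<j} w(i) ≤ c · ∑_{i<j} ŵ(i) for every j ≤ k. Then for every p ≥ 1, (∑ i, (w i)^p)^{1/p} ≤ c · (∑ i, (ŵ i)^p)^{1/p}. -/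
open Finset

/-- Tangent line inequality for rpow. -/
lemma tangent_rpow {a b p : ℝ} (ha : 0 ≤ a) (hb : 0 ≤ b) (hp : 1 ≤ p) :
    a ^ p ≤ b ^ p + p * a ^ (p - 1) * (a - b) := by
  have hp0 : (0:ℝ) < p := lt_of_lt_of_le one_pos hp
  rcases eq_or_lt_of_le ha with h | h
  · -- a = 0
    rw [← h, Real.zero_rpow hp0.ne']
    rcases eq_or_lt_of_le hp with h1 | h1
    · rw [← h1]
      simp [Real.rpow_one]
    · rw [Real.zero_rpow (sub_ne_zero.mpr (ne_of_gt h1))]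
      have := Real.rpow_nonneg hb p
      nlinarith
  · -- 0 < a : Bernoulli with s = b/a - 1
    have hs : (-1:ℝ) ≤ b / a - 1 := by
      have : 0 ≤ b / a := div_nonneg hb ha
      linarith
    have hB := one_add_mul_self_le_rpow_one_add hs hp
    rw [add_sub_cancel] at hB
    have hmul := mul_le_mul_of_nonneg_left hB (Real.rpow_nonneg ha p)
    have h1 : a ^ p * (b / a) ^ p = b ^ p := by
      rw [← Real.mul_rpow ha (div_nonneg hb ha), mul_div_cancel₀ _ h.ne']
    have h2 : a ^ p = a ^ (p - 1) * a := by
      rw [← Real.rpow_add_one h.ne' (p-1)]; ring_nf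
    have h3 : a ^ p * (b / a) = a ^ (p - 1) * b := by
      rw [h2]; field_simp
    calc a ^ p = a ^ p * (1 + p * (b / a - 1)) + p * a ^ (p-1) * (a - b) := by
          rw [mul_add, mul_one, mul_comm p, ← mul_assoc, mul_sub, h3, mul_one, h2]; ring
      _ ≤ b ^ p + p * a ^ (p-1) * (a - b) := by rw [← h1]; linarith [hmul]

/-- Abel summation bound. -/
lemma abel_nonpos (f d : ℕ → ℝ) (hf0 : ∀ i, 0 ≤ f i) (hfa : ∀ i, f (i+1) ≤ f i) :
    ∀ n, (∀ j ≤ n, ∑ i ∈ range j, d i ≤ 0) →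
      ∑ i ∈ range n, f i * d i ≤ f n * ∑ i ∈ range n, d i := by
  intro n
  induction n with
  | zero => simp
  | succ n ih =>
    intro hD
    have hDn : ∑ i ∈ range (n+1), d i ≤ 0 := hD (n+1) le_rfl
    have h1 := ih (fun j hj => hD j (hj.trans (Nat.le_succ n)))
    rw [sum_range_succ, sum_range_succ]
    calc ∑ i ∈ range n, f i * d i + f n * d n
        ≤ f n * ∑ i ∈ range n, d i + f n * d n := by linarith
      _ = f n * (∑ i ∈ range n, d i + d n) := by ring
      _ ≤ f (n+1) * (∑ i ∈ range n, d i + d n) := by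
          apply mul_le_mul_of_nonpos_right (hfa n)
          rw [← sum_range_succ]; exact hDn

theorem stmt_14 (k : ℕ) (c : ℝ) (hc : 1 ≤ c)
    (w what : Fin k → ℝ) (hw0 : ∀ i, 0 ≤ w i) (hwhat0 : ∀ i, 0 ≤ what i)
    (hwa : Antitone w) (hwhata : Antitone what)
    (hpre : ∀ j ≤ k,
      ∑ i ∈ Finset.univ.filter (fun i : Fin k => (i : ℕ) < j), w i ≤
        c * ∑ i ∈ Finset.univ.filter (fun i : Fin k => (i : ℕ) < j), what i) :
    ∀ p : ℝ, 1 ≤ p →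
      (∑ i, (w i) ^ p) ^ (1 / p) ≤ c * (∑ i, (what i) ^ p) ^ (1 / p) := by
  intro p hp
  have hp0 : (0:ℝ) < p := lt_of_lt_of_le one_pos hp
  have hc0 : (0:ℝ) < c := lt_of_lt_of_le one_pos hc
  -- extend to ℕ
  set W : ℕ → ℝ := fun i => if h : i < k then w ⟨i, h⟩ else 0 with hW
  set V : ℕ → ℝ := fun i => if h : i < k then what ⟨i, h⟩ else 0 with hV
  have hW0 : ∀ i, 0 ≤ W i := by
    intro i; simp only [hW]; split
    · exact hw0 _
    · exact le_refl 0
  have hV0 : ∀ i, 0 ≤ V i := by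
    intro i; simp only [hV]; split
    · exact hwhat0 _
    · exact le_refl 0
  have hWa : ∀ i, W (i+1) ≤ W i := by
    intro i; simp only [hW]
    split
    · rename_i h1
      have h0 : i < k := Nat.lt_of_succ_lt h1
      rw [dif_pos h0]
      exact hwa (by simp [Fin.le_def])
    · split
      · exact hw0 _
      · exact le_refl 0
  -- filtered sums as range sums
  have hfil : ∀ (g : Fin k → ℝ) (G : ℕ → ℝ), (∀ i : Fin k, G i = g i) → ∀ j ≤ k,
      ∑ i ∈ Finset.univ.filter (fun i : Fin k => (i : ℕ) < j), g i = ∑ i ∈ range j, G i := by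
    intro g G hG j hj
    rw [sum_filter]
    have e1 : ∀ i : Fin k, (if (i:ℕ) < j then g i else 0)
        = (fun n : ℕ => if n < j then G n else 0) (i : ℕ) := by
      intro i; simp [hG i]
    rw [Finset.sum_congr rfl (fun i _ => e1 i),
      Fin.sum_univ_eq_sum_range (fun n : ℕ => if n < j then G n else 0) k,
      ← sum_filter]
    congr 1
    ext x
    simp only [mem_filter, mem_range]
    omega
  have huniv : ∀ (g : Fin k → ℝ) (G : ℕ → ℝ), (∀ i : Fin k, G i = g i) →
      ∑ i, g i = ∑ i ∈ range k, G i := by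
    intro g G hG
    rw [← Fin.sum_univ_eq_sum_range]
    exact Finset.sum_congr rfl (fun i _ => (hG i).symm)
  -- key inequality: ∑ W^p ≤ ∑ (c V)^p
  have hGW : ∀ i : Fin k, W (i:ℕ) = w i := by intro i; simp [hW, i.isLt]
  have hGV : ∀ i : Fin k, V (i:ℕ) = what i := by intro i; simp [hV, i.isLt]
  have hkey : ∑ i ∈ range k, W i ^ p ≤ ∑ i ∈ range k, (c * V i) ^ p := by
    have hterm : ∀ i, W i ^ p ≤ (c * V i) ^ p
        + p * W i ^ (p - 1) * (W i - c * V i) :=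
      fun i => tangent_rpow (hW0 i) (mul_nonneg hc0.le (hV0 i)) hp
    have habel : ∑ i ∈ range k, (p * W i ^ (p-1)) * (W i - c * V i) ≤ 0 := by
      have h := abel_nonpos (fun i => p * W i ^ (p-1)) (fun i => W i - c * V i)
        (fun i => mul_nonneg hp0.le (Real.rpow_nonneg (hW0 i) _))
        (fun i => mul_le_mul_of_nonneg_left
          (Real.rpow_le_rpow (hW0 (i+1)) (hWa i) (by linarith)) hp0.le)
        k
        (fun j hj => by
          have hx := hpre j hj
          rw [hfil w W hGW j hj, hfil what V hGV j hj, Finset.mul_sum] at hx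
          rw [Finset.sum_sub_distrib]
          linarith)
      refine le_trans h ?_
      apply mul_nonpos_of_nonneg_of_nonpos
        (mul_nonneg hp0.le (Real.rpow_nonneg (hW0 k) _))
      have hx := hpre k le_rfl
      rw [hfil w W hGW k le_rfl, hfil what V hGV k le_rfl, Finset.mul_sum] at hx
      rw [Finset.sum_sub_distrib]
      linarith
    calc ∑ i ∈ range k, W i ^ p
        ≤ ∑ i ∈ range k, ((c * V i) ^ p + p * W i ^ (p-1) * (W i - c * V i)) :=
          Finset.sum_le_sum (fun i _ => hterm i)
      _ = ∑ i ∈ range k, (c * V i) ^ p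
          + ∑ i ∈ range k, (p * W i ^ (p-1)) * (W i - c * V i) := by
          rw [← Finset.sum_add_distrib]
      _ ≤ ∑ i ∈ range k, (c * V i) ^ p := by linarith
  -- finish
  rw [huniv (fun i => w i ^ p) (fun n => W n ^ p) (fun i => by show W i ^ p = w i ^ p; rw [hGW i]),
      huniv (fun i => what i ^ p) (fun n => V n ^ p) (fun i => by show V i ^ p = what i ^ p; rw [hGV i])]
  have hcp : ∑ i ∈ range k, (c * V i) ^ p = c ^ p * ∑ i ∈ range k, V i ^ p := by
    rw [Finset.mul_sum]
    exact Finset.sum_congr rfl (fun i _ => Real.mul_rpow hc0.le (hV0 i))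
  rw [hcp] at hkey
  have hsumV : 0 ≤ ∑ i ∈ range k, V i ^ p :=
    Finset.sum_nonneg (fun i _ => Real.rpow_nonneg (hV0 i) _)
  have hsumW : 0 ≤ ∑ i ∈ range k, W i ^ p :=
    Finset.sum_nonneg (fun i _ => Real.rpow_nonneg (hW0 i) _)
  calc (∑ i ∈ range k, W i ^ p) ^ (1/p)
      ≤ (c ^ p * ∑ i ∈ range k, V i ^ p) ^ (1/p) :=
        Real.rpow_le_rpow hsumW hkey (by positivity)
    _ = c * (∑ i ∈ range k, V i ^ p) ^ (1/p) := by
        rw [Real.mul_rpow (Real.rpow_nonneg hc0.le p) hsumV,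
          ← Real.rpow_mul hc0.le, mul_one_div, div_self hp0.ne', Real.rpow_one]
end
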